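/- If N is a normal subgroup of the free group F₂ of rank 2 such that the quotient F₂/N is isomorphic to F₂, then N is the trivial subgroup. -/

import Mathlib

namespace HopfAux

/-- Reducedness in adjacency form. -/
def Nice (R : List (Fin 2 × Bool)) : Prop :=
  ∀ (j : ℕ) (a : Fin 2) (b : Bool), R[j]? = some (a, b) → R[j+1]? ≠ some (a, !b)

variable (R : List (Fin 2 × Bool))

abbrev X := Fin (R.length + 1) ⊕ Fin (R.length + 1)

lemma lt_of_get? {j : ℕ} {p : Fin 2 × Bool} (h : R[j]? = some p) : j < R.length :=
  (List.getElem?_eq_some_iff.mp h).1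

def fA (a : Fin 2) : X R → X R
  | .inl j =>
    if h : R[(j : ℕ)]? = some (a, true) then .inl ⟨(j : ℕ) + 1, by
      have := lt_of_get? R h; omega⟩
    else if h2 : (j : ℕ) ≠ 0 ∧ R[(j : ℕ) - 1]? = some (a, false) then
      .inl ⟨(j : ℕ) - 1, by omega⟩
    else .inr j
  | .inr j =>
    if h : (j : ℕ) ≠ 0 ∧ R[(j : ℕ) - 1]? = some (a, true) then .inr ⟨(j : ℕ) - 1, by omega⟩
    else if h2 : R[(j : ℕ)]? = some (a, false) then .inr ⟨(j : ℕ) + 1, by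
      have := lt_of_get? R h2; omega⟩
    else .inl j

def gA (a : Fin 2) : X R → X R
  | .inl j =>
    if h : (j : ℕ) ≠ 0 ∧ R[(j : ℕ) - 1]? = some (a, true) then .inl ⟨(j : ℕ) - 1, by omega⟩
    else if h2 : R[(j : ℕ)]? = some (a, false) then .inl ⟨(j : ℕ) + 1, by
      have := lt_of_get? R h2; omega⟩
    else .inr j
  | .inr j =>
    if h : R[(j : ℕ)]? = some (a, true) then .inr ⟨(j : ℕ) + 1, by
      have := lt_of_get? R h; omega⟩
    else if h2 : (j : ℕ) ≠ 0 ∧ R[(j : ℕ) - 1]? = some (a, false) then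
      .inr ⟨(j : ℕ) - 1, by omega⟩
    else .inl j

lemma gf (hR : Nice R) (a : Fin 2) : ∀ x, gA R a (fA R a x) = x := by
  rintro (j | j)
  · by_cases h : R[(j : ℕ)]? = some (a, true)
    · have hj := lt_of_get? R h
      rw [fA, dif_pos h]
      rw [gA]
      rw [dif_pos (show ((j : ℕ) + 1) ≠ 0 ∧ R[(j : ℕ) + 1 - 1]? = some (a, true) from
        ⟨by omega, by simpa using h⟩)]
      simp
    · by_cases h2 : (j : ℕ) ≠ 0 ∧ R[(j : ℕ) - 1]? = some (a, false)
      · rw [fA, dif_neg h, dif_pos h2]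
        rw [gA]
        have hb1 : ¬(((j : ℕ) - 1) ≠ 0 ∧ R[(j : ℕ) - 1 - 1]? = some (a, true)) := by
          rintro ⟨hne, hget⟩
          exact hR _ _ _ hget (by simpa [show (j:ℕ) - 1 - 1 + 1 = (j:ℕ) - 1 by omega] using h2.2)
        rw [dif_neg hb1, dif_pos (show R[(j : ℕ) - 1]? = some (a, false) from h2.2)]
        have : (j : ℕ) - 1 + 1 = (j : ℕ) := by omega
        simp [Fin.ext_iff, this]
      · rw [fA, dif_neg h, dif_neg h2, gA, dif_neg h, dif_neg h2]
  · by_cases h : (j : ℕ) ≠ 0 ∧ R[(j : ℕ) - 1]? = some (a, true)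
    · rw [fA, dif_pos h, gA]
      have : R[((j : ℕ) - 1 : ℕ)]? = some (a, true) := h.2
      rw [dif_pos this]
      have : (j : ℕ) - 1 + 1 = (j : ℕ) := by omega
      simp [Fin.ext_iff, this]
    · by_cases h2 : R[(j : ℕ)]? = some (a, false)
      · rw [fA, dif_neg h, dif_pos h2, gA]
        have hb1 : ¬ R[((j : ℕ) + 1 : ℕ)]? = some (a, true) := fun hget =>
          hR _ _ _ h2 (by simpa using hget)
        rw [dif_neg hb1, dif_pos (show ((j : ℕ) + 1) ≠ 0 ∧ R[(j : ℕ) + 1 - 1]? = some (a, false)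
          from ⟨by omega, by simpa using h2⟩)]
        simp
      · rw [fA, dif_neg h, dif_neg h2, gA, dif_neg h, dif_neg h2]

noncomputable def perm (hR : Nice R) (a : Fin 2) : Equiv.Perm (X R) :=
  Equiv.ofBijective (fA R a)
    (Finite.injective_iff_bijective.mp (Function.LeftInverse.injective (gf R hR a)))

lemma perm_apply (hR : Nice R) (a : Fin 2) (x : X R) : perm R hR a x = fA R a x := rfl

lemma step (hR : Nice R) (a : Fin 2) (b : Bool) (j : ℕ) (hj : R[j]? = some (a, b))
    (hlt : j < R.length) :
    (cond b (perm R hR a) (perm R hR a)⁻¹) (Sum.inl ⟨j, by omega⟩)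
      = Sum.inl ⟨j + 1, by omega⟩ := by
  cases b with
  | true =>
    simp only [cond_true, perm_apply]
    rw [fA]
    simp only []
    rw [dif_pos (show R[j]? = some (a, true) from hj)]
  | false =>
    simp only [cond_false]
    have hf : perm R hR a (Sum.inl ⟨j + 1, by omega⟩) = Sum.inl ⟨j, by omega⟩ := by
      rw [perm_apply, fA]
      have h1 : ¬ R[(j + 1 : ℕ)]? = some (a, true) := fun hget => hR _ _ _ hj (by simpa using hget)
      rw [dif_neg h1, dif_pos (show (j + 1) ≠ 0 ∧ R[(j + 1 : ℕ) - 1]? = some (a, false)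
        from ⟨by omega, by simpa using hj⟩)]
      simp
    rw [← hf]
    exact (perm R hR a).symm_apply_apply _


lemma nice_reverse_toWord (w : FreeGroup (Fin 2)) : Nice w.toWord.reverse := by
  intro j a b hj hj1
  set L := w.toWord with hL
  have hn : L.reverse.length = L.length := List.length_reverse (as := L)
  have hlt1 : j + 1 < L.length := by have := lt_of_get? _ hj1; omega
  have e0 : L.reverse[j]'(by omega) = (a, b) := by
    have := List.getElem?_eq_some_iff.mp hj
    exact this.2
  have e1 : L.reverse[j+1]'(by omega) = (a, !b) := (List.getElem?_eq_some_iff.mp hj1).2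
  rw [List.getElem_reverse] at e0 e1
  set i := L.length - 1 - (j + 1) with hi
  have hi1 : L.length - 1 - j = i + 1 := by omega
  have hilt : i + 1 < L.length := by omega
  have e1' : L[i]'(by omega) = (a, !b) := by
    have : L.length - 1 - (j + 1) = i := rfl
    exact e1
  have o0 : L[L.length - 1 - j]? = some (a, b) := by
    rw [List.getElem?_eq_getElem (by omega)]
    exact congrArg some e0
  rw [hi1] at o0
  have e0' : L[i + 1]'hilt = (a, !(!b)) := by
    rw [Bool.not_not]
    exact (List.getElem?_eq_some_iff.mp o0).2
  have hsplit : L = L.take i ++ (a, !b) :: (a, !(!b)) :: L.drop (i + 2) := by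
    conv_lhs => rw [← List.take_append_drop i L]
    rw [List.drop_eq_getElem_cons (by omega : i < L.length),
        List.drop_eq_getElem_cons (by omega : i + 1 < L.length), e1', e0']
  have hred : FreeGroup.reduce L = L := FreeGroup.reduce_toWord w
  exact FreeGroup.reduce.not (by rw [hred]; exact hsplit)

/-- the letter-to-permutation map -/
noncomputable def F (hR : Nice R) (p : Fin 2 × Bool) : Equiv.Perm (X R) :=
  cond p.2 (perm R hR p.1) (perm R hR p.1)⁻¹

lemma orbit (hR : Nice R) :
    ∀ k, (hk : k ≤ R.length) →
      ((R.take k).reverse.map (F R hR)).prod (Sum.inl ⟨0, by omega⟩)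
        = Sum.inl ⟨k, by omega⟩ := by
  intro k
  induction k with
  | zero => intro hk; simp
  | succ k ih =>
    intro hk
    have hklt : k < R.length := by omega
    have htake : R.take (k + 1) = R.take k ++ [R[k]'hklt] := by
      rw [List.take_succ]
      simp [List.getElem?_eq_getElem hklt]
    rw [htake, List.reverse_append]
    simp only [List.reverse_singleton, List.singleton_append, List.map_cons, List.prod_cons]
    rw [Equiv.Perm.mul_apply, ih (by omega)]
    have hj' : R[k]? = some ((R[k]'hklt).1, (R[k]'hklt).2) := by
      rw [List.getElem?_eq_getElem hklt]
    have := step R hR _ _ k hj' hklt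
    simpa [F] using this


lemma exists_finite_hom (w : FreeGroup (Fin 2)) (hw : w ≠ 1) :
    ∃ (G : Type) (_ : Group G) (_ : Finite G) (ψ : FreeGroup (Fin 2) →* G), ψ w ≠ 1 := by
  set R := w.toWord.reverse with hRdef
  have hR : Nice R := nice_reverse_toWord w
  refine ⟨Equiv.Perm (X R), inferInstance, inferInstance,
    FreeGroup.lift (fun a => perm R hR a), ?_⟩
  have hlift : FreeGroup.lift (fun a => perm R hR a) w
      = ((w.toWord).map (F R hR)).prod := by
    conv_lhs => rw [← FreeGroup.mk_toWord (x := w)]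
    rw [FreeGroup.lift_mk]
    rfl
  have hne : w.toWord ≠ [] := by
    intro hnil
    exact hw (FreeGroup.toWord_injective (by rw [hnil, FreeGroup.toWord_one]))
  have hn : 0 < R.length := by
    rw [hRdef, List.length_reverse]
    exact List.length_pos_iff.mpr hne
  have horb := orbit R hR R.length le_rfl
  rw [List.take_length] at horb
  rw [show w.toWord = R.reverse by rw [hRdef, List.reverse_reverse]] at hlift
  intro hone
  rw [hlift] at hone
  have h0 := congrArg (fun σ : Equiv.Perm (X R) => σ (Sum.inl ⟨0, by omega⟩)) hone
  simp only [Equiv.Perm.one_apply] at h0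
  rw [horb] at h0
  have : R.length = 0 := by
    have := Sum.inl.inj h0
    simpa [Fin.ext_iff] using this
  omega

lemma surj_inj (φ : FreeGroup (Fin 2) →* FreeGroup (Fin 2)) (hφ : Function.Surjective φ) :
    Function.Injective φ := by
  rw [injective_iff_map_eq_one φ]
  intro w hw1
  by_contra hw
  obtain ⟨G, _, _, ψ, hψ⟩ := exists_finite_hom w hw
  have hfin : Finite (FreeGroup (Fin 2) →* G) := Finite.of_equiv _ FreeGroup.lift
  have hT : Function.Injective (fun χ : FreeGroup (Fin 2) →* G => χ.comp φ) := by
    intro χ₁ χ₂ h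
    exact (MonoidHom.cancel_right hφ).mp h
  obtain ⟨χ, hχ⟩ := Finite.injective_iff_surjective.mp hT ψ
  apply hψ
  rw [← hχ]
  simp only [MonoidHom.comp_apply, hw1, map_one]

end HopfAux

theorem free_group_quotient_iso_self_implies_trivial
    (N : Subgroup (FreeGroup (Fin 2))) [N.Normal]
    (h : Nonempty ((FreeGroup (Fin 2) ⧸ N) ≃* FreeGroup (Fin 2))) :
    N = ⊥ := by
  obtain ⟨e⟩ := h
  set φ := e.toMonoidHom.comp (QuotientGroup.mk' N) with hφdef
  have hsurj : Function.Surjective φ := by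
    rw [hφdef, MonoidHom.coe_comp]
    exact e.surjective.comp (QuotientGroup.mk'_surjective N)
  have hinj := HopfAux.surj_inj φ hsurj
  rw [eq_bot_iff]
  intro n hn
  have h1 : φ n = 1 := by
    rw [hφdef]
    simp only [MonoidHom.comp_apply, QuotientGroup.mk'_apply]
    rw [(QuotientGroup.eq_one_iff n).mpr hn, map_one]
  have : n = 1 := hinj (by rw [h1, map_one])
  simp [this, Subgroup.mem_bot]
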